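/- (Clifford relation, after Baez–Huerta.) Let M be a Hermitian 2×2 matrix over A, i.e. M = [[α·1, a],[σ(a), β·1]] with α, β ∈ ℂ and a ∈ A, and set det(M) := αβ − N(a) ∈ ℂ. Then for every Q ∈ A²: M̃·(M·Q) = −det(M)·Q and M·(M̃·Q) = −det(M)·Q. In other words, the action maps ρ(M)Q := M·Q (on Σ = A²) and ρ(M)Q := M̃·Q (on Σ* = A²) satisfy ρ(M)ρ(M) = −det(M)·id, making Σ ⊕ Σ* a ℤ/2ℤ-graded module over the Clifford algebra of the space V of Hermitian 2×2 matrices over A with quadratic form M ↦ −det(M). -/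
import Mathlib


/-!
Statement 4 (Clifford relation, after Baez–Huerta): for a Hermitian 2×2 matrix
`M = [[α·1, a],[σ(a), β·1]]` over an alternative complex composition algebra `A`,
with `det(M) = αβ − N(a)`, one has `M̃·(M·Q) = −det(M)·Q` and `M·(M̃·Q) = −det(M)·Q`
for every `Q ∈ A²`.
-/

namespace Stmt4

variable {A : Type*} [AddCommGroup A] [Module ℂ A]

/-- Matrix–vector multiplication of a 2×2 matrix over `A` with a column vector in `A²`. -/
def act (mul : A → A → A) (M : Fin 2 → Fin 2 → A) (Q : Fin 2 → A) : Fin 2 → A :=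
  fun k => mul (M k 0) (Q 0) + mul (M k 1) (Q 1)

/-- `M̃ = M − tr(M)·1₂`, where `tr(M) = M₀₀ + M₁₁`. -/
def tilde (M : Fin 2 → Fin 2 → A) : Fin 2 → Fin 2 → A :=
  fun k l => M k l - if k = l then M 0 0 + M 1 1 else 0

theorem clifford_relation
    (mul : A → A → A) (one : A) (σ : A → A) (Re Nm : A → ℂ)
    -- `mul` is ℂ-bilinear
    (hmul_addl : ∀ x y z : A, mul (x + y) z = mul x z + mul y z)
    (hmul_addr : ∀ x y z : A, mul x (y + z) = mul x y + mul x z)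
    (hmul_smull : ∀ (c : ℂ) (x y : A), mul (c • x) y = c • mul x y)
    (hmul_smulr : ∀ (c : ℂ) (x y : A), mul x (c • y) = c • mul x y)
    -- `one` is a unit
    (hone_mul : ∀ x : A, mul one x = x)
    (hmul_one : ∀ x : A, mul x one = x)
    -- `A` is alternative: the associator is alternating
    (halt_left : ∀ x y : A, mul (mul x x) y = mul x (mul x y))
    (halt_right : ∀ x y : A, mul (mul x y) y = mul x (mul y y))
    (halt_flex : ∀ x y : A, mul (mul x y) x = mul x (mul y x))
    -- `σ` is a ℂ-linear anti-involution
    (hσ_add : ∀ x y : A, σ (x + y) = σ x + σ y)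
    (hσ_smul : ∀ (c : ℂ) (x : A), σ (c • x) = c • σ x)
    (hσ_mul : ∀ x y : A, σ (mul x y) = mul (σ y) (σ x))
    (hσ_invol : ∀ x : A, σ (σ x) = x)
    (hσ_one : σ one = one)
    -- real part and norm scalars
    (hRe : ∀ x : A, x + σ x = (2 * Re x) • one)
    (hNm : ∀ x : A, mul x (σ x) = Nm x • one)
    -- nondegeneracy of the form `(x,y) ↦ Re(x·σ(y))`
    (hnondeg : ∀ x : A, (∀ y : A, Re (mul x (σ y)) = 0) → x = 0)
    (α β : ℂ) (a : A) (Q : Fin 2 → A) :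
    (∀ k, act mul (tilde ![![α • one, a], ![σ a, β • one]])
        (act mul ![![α • one, a], ![σ a, β • one]] Q) k = (-(α * β - Nm a)) • Q k)
    ∧ (∀ k, act mul ![![α • one, a], ![σ a, β • one]]
        (act mul (tilde ![![α • one, a], ![σ a, β • one]]) Q) k = (-(α * β - Nm a)) • Q k) := by
  have ha : a = (2 * Re a) • one - σ a := eq_sub_of_add_eq (hRe a)
  have hσa : σ a = (2 * Re a) • one - a := eq_sub_of_add_eq' (hRe a)
  have hmul_subl : ∀ x y z : A, mul (x - y) z = mul x z - mul y z := by
    intro x y z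
    have : x - y = x + (-1 : ℂ) • y := by rw [neg_one_smul]; abel
    rw [this, hmul_addl, hmul_smull, neg_one_smul]; abel
  have hmul_subr : ∀ x y z : A, mul x (y - z) = mul x y - mul x z := by
    intro x y z
    have : y - z = y + (-1 : ℂ) • z := by rw [neg_one_smul]; abel
    rw [this, hmul_addr, hmul_smulr, neg_one_smul]; abel
  have hA : mul (σ a) a = (2 * Re a) • (σ a) - mul (σ a) (σ a) := by
    nth_rewrite 2 [ha]
    rw [hmul_subr, hmul_smulr, hmul_one]
  have hB : mul a (σ a) = (2 * Re a) • a - mul a a := by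
    rw [hσa, hmul_subr, hmul_smulr, hmul_one]
  have hB' : mul a (σ a) = (2 * Re a) • (σ a) - mul (σ a) (σ a) := by
    nth_rewrite 1 [ha]
    rw [hmul_subl, hmul_smull, hone_mul]
  have hσaa : mul (σ a) a = Nm a • one := by rw [hA, ← hB', hNm]
  have h1 : ∀ x, mul a (mul (σ a) x) = Nm a • x := by
    intro x
    have e1 : mul (σ a) x = (2 * Re a) • x - mul a x := by
      rw [hσa, hmul_subl, hmul_smull, hone_mul]
    have e2 : mul (mul a (σ a)) x = (2 * Re a) • (mul a x) - mul (mul a a) x := by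
      rw [hB, hmul_subl, hmul_smull]
    rw [e1, hmul_subr, hmul_smulr, ← halt_left, ← e2, hNm, hmul_smull, hone_mul]
  have h2 : ∀ x, mul (σ a) (mul a x) = Nm a • x := by
    intro x
    have e1 : mul a x = (2 * Re a) • x - mul (σ a) x := by
      have e0 : mul (σ a) x = (2 * Re a) • x - mul a x := by
        rw [hσa, hmul_subl, hmul_smull, hone_mul]
      rw [e0, sub_sub_cancel]
    have e2 : mul (mul (σ a) a) x = (2 * Re a) • (mul (σ a) x) - mul (mul (σ a) (σ a)) x := by
      rw [hA, hmul_subl, hmul_smull]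
    rw [e1, hmul_subr, hmul_smulr, ← halt_left, ← e2, hσaa, hmul_smull, hone_mul]
  have hmul_zerol : ∀ y : A, mul 0 y = 0 := fun y => by
    have := hmul_smull 0 0 y; rwa [zero_smul, zero_smul] at this
  have hmul_zeror : ∀ y : A, mul y 0 = 0 := fun y => by
    have := hmul_smulr 0 y 0; rwa [zero_smul, zero_smul] at this
  constructor <;> intro k <;> fin_cases k <;>
    simp only [act, tilde, Fin.mk_zero, Fin.mk_one, Fin.isValue, Matrix.cons_val', Matrix.cons_val_zero,
      Matrix.cons_val_one, Matrix.head_cons, Matrix.head_fin_const, Matrix.empty_val',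
      Matrix.cons_val_fin_one, if_true, if_false, reduceIte, Fin.reduceEq, hmul_zerol, hmul_zeror, smul_zero, hmul_addl, hmul_addr,
      hmul_subl, hmul_subr, hmul_smull, hmul_smulr, hone_mul, hmul_one, h1, h2] <;>
    module

end Stmt4
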